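/- The ring T_2(F_3) of upper triangular 2×2 matrices over F_3 has covering number 4. -/
import Mathlib


/-- `R` is the union of `n` proper subrings (subrings need not contain 1). -/
def CoversWith (R : Type*) [NonUnitalRing R] (n : ℕ) : Prop :=
  ∃ c : Fin n → NonUnitalSubring R, (∀ i, c i ≠ ⊤) ∧ ∀ x : R, ∃ i, x ∈ c i

/-- The ring `T₂(F₃)` of upper triangular `2 × 2` matrices over `F₃`, as a
subring of `M₂(F₃)`. -/
def T2F3 : NonUnitalSubring (Matrix (Fin 2) (Fin 2) (ZMod 3)) where
  carrier := {A | A 1 0 = 0}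
  zero_mem' := rfl
  add_mem' := by
    intro a b ha hb
    simp only [Set.mem_setOf_eq, Matrix.add_apply] at *
    rw [ha, hb, add_zero]
  neg_mem' := by
    intro a ha
    simp only [Set.mem_setOf_eq, Matrix.neg_apply] at *
    rw [ha, neg_zero]
  mul_mem' := by
    intro a b ha hb
    simp only [Set.mem_setOf_eq] at *
    rw [Matrix.mul_apply, Fin.sum_univ_two, ha, hb, zero_mul, mul_zero, add_zero]

namespace T2F3Aux

def e : T2F3 ≃ (ZMod 3 × ZMod 3 × ZMod 3) where
  toFun x := (x.1 0 0, x.1 0 1, x.1 1 1)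
  invFun p := ⟨!![p.1, p.2.1; 0, p.2.2], by show _ = 0; simp⟩
  left_inv x := by
    ext i j
    fin_cases i <;> fin_cases j <;> simp
    exact x.2.symm
  right_inv p := by simp

instance : Finite T2F3 := Finite.of_equiv _ e.symm

lemma card27 : Nat.card T2F3 = 27 := by
  rw [Nat.card_congr e]; simp [Nat.card_eq_fintype_card]

lemma mul00 (x y : T2F3) : (x * y).1 0 0 = x.1 0 0 * y.1 0 0 := by
  show (x.1 * y.1) 0 0 = _
  rw [Matrix.mul_apply, Fin.sum_univ_two, y.2, mul_zero, add_zero]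

lemma mul01 (x y : T2F3) : (x * y).1 0 1 = x.1 0 0 * y.1 0 1 + x.1 0 1 * y.1 1 1 := by
  show (x.1 * y.1) 0 1 = _
  rw [Matrix.mul_apply, Fin.sum_univ_two]

lemma mul11 (x y : T2F3) : (x * y).1 1 1 = x.1 1 1 * y.1 1 1 := by
  show (x.1 * y.1) 1 1 = _
  rw [Matrix.mul_apply, Fin.sum_univ_two, x.2, zero_mul, zero_add]

/-- The subring of matrices with `b = α * (c - a)`. -/
def sr (α : ZMod 3) : NonUnitalSubring T2F3 where
  carrier := {x | x.1 0 1 = α * (x.1 1 1 - x.1 0 0)}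
  zero_mem' := by simp
  add_mem' := by
    intro x y hx hy
    simp only [Set.mem_setOf_eq] at *
    show (x.1 + y.1) 0 1 = α * ((x.1 + y.1) 1 1 - (x.1 + y.1) 0 0)
    simp only [Matrix.add_apply]
    rw [hx, hy]; ring
  neg_mem' := by
    intro x hx
    simp only [Set.mem_setOf_eq] at *
    show (-x.1) 0 1 = α * ((-x.1) 1 1 - (-x.1) 0 0)
    simp only [Matrix.neg_apply]
    rw [hx]; ring
  mul_mem' := by
    intro x y hx hy
    simp only [Set.mem_setOf_eq] at *
    rw [mul01, mul11, mul00, hx, hy]; ring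

/-- The subring of matrices with `a = c`. -/
def srD : NonUnitalSubring T2F3 where
  carrier := {x | x.1 0 0 = x.1 1 1}
  zero_mem' := rfl
  add_mem' := by
    intro x y hx hy
    simp only [Set.mem_setOf_eq] at *
    show (x.1 + y.1) 0 0 = (x.1 + y.1) 1 1
    simp only [Matrix.add_apply]
    rw [hx, hy]
  neg_mem' := by
    intro x hx
    simp only [Set.mem_setOf_eq] at *
    show (-x.1) 0 0 = (-x.1) 1 1
    simp only [Matrix.neg_apply]
    rw [hx]
  mul_mem' := by
    intro x y hx hy
    simp only [Set.mem_setOf_eq] at *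
    rw [mul00, mul11, hx, hy]

lemma mem_sr (α : ZMod 3) (x : T2F3) : x ∈ sr α ↔ x.1 0 1 = α * (x.1 1 1 - x.1 0 0) :=
  Iff.rfl

lemma mem_srD (x : T2F3) : x ∈ srD ↔ x.1 0 0 = x.1 1 1 := Iff.rfl

lemma sr_ne_top (α : ZMod 3) : sr α ≠ ⊤ := by
  intro h
  have hE : (⟨!![0, 1; 0, 0], by show _ = 0; simp⟩ : T2F3) ∈ sr α := by
    rw [h]; trivial
  rw [mem_sr] at hE
  simp at hE

lemma srD_ne_top : srD ≠ ⊤ := by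
  intro h
  have hE : (⟨!![0, 0; 0, 1], by show _ = 0; simp⟩ : T2F3) ∈ srD := by
    rw [h]; trivial
  rw [mem_srD] at hE
  simp at hE

lemma card_le_nine (S : NonUnitalSubring T2F3) (h : S ≠ ⊤) :
    (S : Set T2F3).ncard ≤ 9 := by
  have hdvd : Nat.card S.toAddSubgroup ∣ Nat.card T2F3 :=
    AddSubgroup.card_addSubgroup_dvd_card S.toAddSubgroup
  have hcard : (S : Set T2F3).ncard = Nat.card S.toAddSubgroup := by
    rw [← Nat.card_coe_set_eq]; rfl
  rw [card27] at hdvd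
  rw [hcard]
  by_contra hgt
  push_neg at hgt
  have key : ∀ d ≤ 27, d ∣ 27 → 9 < d → d = 27 := by decide
  have h27 : Nat.card S.toAddSubgroup = 27 :=
    key _ (Nat.le_of_dvd (by norm_num) hdvd) hdvd hgt
  have : (S : Set T2F3) = Set.univ := by
    apply Set.eq_of_subset_of_ncard_le (Set.subset_univ _)
    rw [Set.ncard_univ, card27, hcard, h27]
  exact h (SetLike.ext' (by simpa using this))

end T2F3Aux

open T2F3Aux in
/-- The covering number of `T₂(F₃)` is 4. -/
theorem covering_number_T2F3_eq_four :
    CoversWith T2F3 4 ∧ ¬ CoversWith T2F3 3 := by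
  constructor
  · refine ⟨![srD, sr 0, sr 1, sr 2], ?_, ?_⟩
    · intro i
      fin_cases i
      · exact srD_ne_top
      · exact sr_ne_top 0
      · exact sr_ne_top 1
      · exact sr_ne_top 2
    · intro x
      have key : ∀ a b c : ZMod 3,
          a = c ∨ b = 0 * (c - a) ∨ b = 1 * (c - a) ∨ b = 2 * (c - a) := by decide
      rcases key (x.1 0 0) (x.1 0 1) (x.1 1 1) with h | h | h | h
      · exact ⟨0, h⟩
      · exact ⟨1, h⟩
      · exact ⟨2, h⟩
      · exact ⟨3, h⟩
  · rintro ⟨c, hne, hcov⟩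
    have hub : (Set.univ : Set T2F3) ⊆
        (c 0 : Set T2F3) ∪ ((c 1 : Set T2F3) \ {0}) ∪ ((c 2 : Set T2F3) \ {0}) := by
      intro x _
      obtain ⟨i, hi⟩ := hcov x
      by_cases hx0 : x = 0
      · exact Or.inl (Or.inl (hx0 ▸ (c 0).zero_mem))
      · fin_cases i
        · exact Or.inl (Or.inl hi)
        · exact Or.inl (Or.inr ⟨hi, hx0⟩)
        · exact Or.inr ⟨hi, hx0⟩
    have h1 : ((c 1 : Set T2F3) \ {0}).ncard ≤ 8 := by
      have := Set.ncard_diff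
        (Set.singleton_subset_iff.mpr ((c 1).zero_mem : (0 : T2F3) ∈ (c 1 : Set T2F3)))
        (Set.toFinite _)
      have h9 := card_le_nine (c 1) (hne 1)
      rw [this]
      simp only [Set.ncard_singleton]
      omega
    have h2 : ((c 2 : Set T2F3) \ {0}).ncard ≤ 8 := by
      have := Set.ncard_diff
        (Set.singleton_subset_iff.mpr ((c 2).zero_mem : (0 : T2F3) ∈ (c 2 : Set T2F3)))
        (Set.toFinite _)
      have h9 := card_le_nine (c 2) (hne 2)
      rw [this]
      simp only [Set.ncard_singleton]
      omega
    have h0 := card_le_nine (c 0) (hne 0)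
    have hle : (Set.univ : Set T2F3).ncard ≤ 25 := by
      calc (Set.univ : Set T2F3).ncard
          ≤ ((c 0 : Set T2F3) ∪ ((c 1 : Set T2F3) \ {0}) ∪ ((c 2 : Set T2F3) \ {0})).ncard :=
            Set.ncard_le_ncard hub (Set.toFinite _)
        _ ≤ ((c 0 : Set T2F3) ∪ ((c 1 : Set T2F3) \ {0})).ncard
              + ((c 2 : Set T2F3) \ {0}).ncard := Set.ncard_union_le _ _
        _ ≤ (c 0 : Set T2F3).ncard + ((c 1 : Set T2F3) \ {0}).ncard
              + ((c 2 : Set T2F3) \ {0}).ncard := by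
            have := Set.ncard_union_le (c 0 : Set T2F3) ((c 1 : Set T2F3) \ {0})
            omega
        _ ≤ 25 := by omega
    rw [Set.ncard_univ, card27] at hle
    omega
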